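/- arXiv:2503.16846 — 2 statements merged into one kernel-verified Lean document; each statement's English description precedes it below -/
import Mathlib

section
/- Let F(U) = (1/2)‖W − U Uᵀ‖_F² with W ∈ R^{m×m} symmetric, and let ψ(U) = (3/2)‖U‖_F⁴ + ‖W‖_F ‖U‖_F². Then for any L ≥ 1 and all U, Z ∈ R^{m×r}, ⟨Z, (L∇²ψ(U) − ∇²F(U))Z⟩ ≥ 0, i.e., L∇²ψ(U) − ∇²F(U) is positive semidefinite as a quadratic form. -/
open Matrix

noncomputable def finner {m r : ℕ} (A B : Matrix (Fin m) (Fin r) ℝ) : ℝ :=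
  Matrix.trace (Aᵀ * B)

noncomputable def fnorm {m r : ℕ} (A : Matrix (Fin m) (Fin r) ℝ) : ℝ :=
  Real.sqrt (finner A A)

lemma finner_eq {m r : ℕ} (A B : Matrix (Fin m) (Fin r) ℝ) :
    finner A B = ∑ i, ∑ j, A i j * B i j := by
  simp only [finner, Matrix.trace, Matrix.diag, Matrix.mul_apply, Matrix.transpose_apply]
  exact Finset.sum_comm

lemma finner_self_eq {m r : ℕ} (A : Matrix (Fin m) (Fin r) ℝ) :
    finner A A = ∑ i, ∑ j, (A i j) ^ 2 := by
  rw [finner_eq]; simp [sq]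

lemma finner_self_nonneg {m r : ℕ} (A : Matrix (Fin m) (Fin r) ℝ) :
    0 ≤ finner A A := by
  rw [finner_self_eq]; positivity

lemma finner_transpose_self {m r : ℕ} (A : Matrix (Fin m) (Fin r) ℝ) :
    finner Aᵀ Aᵀ = finner A A := by
  rw [finner_self_eq, finner_self_eq]
  simp only [Matrix.transpose_apply]
  exact Finset.sum_comm

lemma key {a b c : ℕ} (A : Fin a → Fin c → ℝ) (B : Fin b → Fin c → ℝ) :
    ∑ i, ∑ j, (∑ k, A i k * B j k) ^ 2
      ≤ (∑ i, ∑ k, (A i k) ^ 2) * (∑ j, ∑ k, (B j k) ^ 2) := by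
  calc ∑ i, ∑ j, (∑ k, A i k * B j k) ^ 2
      ≤ ∑ i, ∑ j, (∑ k, (A i k) ^ 2) * (∑ k, (B j k) ^ 2) := by
        refine Finset.sum_le_sum fun i _ => Finset.sum_le_sum fun j _ => ?_
        exact Finset.sum_mul_sq_le_sq_mul_sq _ _ _
    _ = (∑ i, ∑ k, (A i k) ^ 2) * (∑ j, ∑ k, (B j k) ^ 2) := by
        rw [← Finset.sum_mul_sum]

lemma finner_cs {m r : ℕ} (A B : Matrix (Fin m) (Fin r) ℝ) :
    (finner A B) ^ 2 ≤ finner A A * finner B B := by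
  rw [finner_eq, finner_self_eq, finner_self_eq]
  classical
  have h1 : (∑ p : Fin m × Fin r, A p.1 p.2 * B p.1 p.2) = ∑ i, ∑ j, A i j * B i j :=
    Fintype.sum_prod_type _
  have h2 : (∑ p : Fin m × Fin r, (A p.1 p.2) ^ 2) = ∑ i, ∑ j, (A i j) ^ 2 :=
    Fintype.sum_prod_type _
  have h3 : (∑ p : Fin m × Fin r, (B p.1 p.2) ^ 2) = ∑ i, ∑ j, (B i j) ^ 2 :=
    Fintype.sum_prod_type _
  rw [← h1, ← h2, ← h3]
  exact Finset.sum_mul_sq_le_sq_mul_sq _ _ _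

lemma trace_mul_self_le {n : ℕ} (M : Matrix (Fin n) (Fin n) ℝ) :
    Matrix.trace (M * M) ≤ finner M M := by
  have htr : Matrix.trace (M * M) = ∑ k, ∑ l, M k l * M l k := by
    simp [Matrix.trace, Matrix.diag, Matrix.mul_apply]
  have hswap : ∑ k, ∑ l, (M l k) ^ 2 = ∑ k, ∑ l, (M k l) ^ 2 :=
    Finset.sum_comm
  have h1 : 2 * (∑ k, ∑ l, M k l * M l k) ≤ ∑ k, ∑ l, ((M k l) ^ 2 + (M l k) ^ 2) := by
    rw [Finset.mul_sum]
    refine Finset.sum_le_sum fun k _ => ?_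
    rw [Finset.mul_sum]
    refine Finset.sum_le_sum fun l _ => ?_
    nlinarith [sq_nonneg (M k l - M l k)]
  have h2 : ∑ k, ∑ l, ((M k l) ^ 2 + (M l k) ^ 2)
      = (∑ k, ∑ l, (M k l) ^ 2) + (∑ k, ∑ l, (M l k) ^ 2) := by
    simp_rw [Finset.sum_add_distrib]
  rw [htr, finner_self_eq]
  linarith
lemma finner_smul {m r : ℕ} (A B : Matrix (Fin m) (Fin r) ℝ) (s : ℝ) :
    finner A (s • B) = s * finner A B := by
  simp [finner, Matrix.mul_smul]

lemma finner_add {m r : ℕ} (A B C : Matrix (Fin m) (Fin r) ℝ) :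
    finner A (B + C) = finner A B + finner A C := by
  simp [finner, Matrix.mul_add]

lemma finner_sub {m r : ℕ} (A B C : Matrix (Fin m) (Fin r) ℝ) :
    finner A (B - C) = finner A B - finner A C := by
  simp [finner, Matrix.mul_sub]

theorem stmt5 (m r : ℕ) (W : Matrix (Fin m) (Fin m) ℝ) (hW : Wᵀ = W)
    (L : ℝ) (hL : 1 ≤ L) (U Z : Matrix (Fin m) (Fin r) ℝ) :
    0 ≤ L * (6 * finner U U * finner Z Z + 12 * (finner U Z) ^ 2
              + 2 * fnorm W * finner Z Z)
        - finner Z ((2:ℝ) • (Z * Uᵀ * U + U * Zᵀ * U + U * Uᵀ * Z - W * Z)) := by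
  have ha0 : 0 ≤ finner U U := finner_self_nonneg U
  have hc0 : 0 ≤ finner Z Z := finner_self_nonneg Z
  have hw0 : 0 ≤ fnorm W := Real.sqrt_nonneg _
  have hwsq : (fnorm W) ^ 2 = finner W W := Real.sq_sqrt (finner_self_nonneg W)
  -- bound T1
  have hT1 : finner Z (Z * Uᵀ * U) ≤ finner U U * finner Z Z := by
    have heq : finner Z (Z * Uᵀ * U) = finner (Z * Uᵀ) (Z * Uᵀ) := by
      simp only [finner, Matrix.transpose_mul, Matrix.transpose_transpose]
      rw [← Matrix.mul_assoc, ← Matrix.mul_assoc]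
      rw [Matrix.trace_mul_comm (Zᵀ * Z * Uᵀ) U]
      simp only [Matrix.mul_assoc]
    rw [heq, finner_self_eq]
    have h : ∑ i, ∑ j, ((Z * Uᵀ) i j) ^ 2
        = ∑ i, ∑ j, (∑ k, Z i k * U j k) ^ 2 := by
      simp [Matrix.mul_apply, Matrix.transpose_apply]
    rw [h]
    calc ∑ i, ∑ j, (∑ k, Z i k * U j k) ^ 2
        ≤ (∑ i, ∑ k, (Z i k) ^ 2) * (∑ j, ∑ k, (U j k) ^ 2) := key _ _
      _ = finner Z Z * finner U U := by rw [← finner_self_eq, ← finner_self_eq]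
      _ = finner U U * finner Z Z := mul_comm _ _
  -- common bound for ‖UᵀZ‖²
  have hUZ : finner (Uᵀ * Z) (Uᵀ * Z) ≤ finner U U * finner Z Z := by
    rw [finner_self_eq]
    have h : ∑ i, ∑ j, ((Uᵀ * Z) i j) ^ 2
        = ∑ i, ∑ j, (∑ k, Uᵀ i k * Zᵀ j k) ^ 2 := by
      simp [Matrix.mul_apply, Matrix.transpose_apply]
    rw [h]
    calc ∑ i, ∑ j, (∑ k, Uᵀ i k * Zᵀ j k) ^ 2
        ≤ (∑ i, ∑ k, (Uᵀ i k) ^ 2) * (∑ j, ∑ k, (Zᵀ j k) ^ 2) := key _ _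
      _ = finner Uᵀ Uᵀ * finner Zᵀ Zᵀ := by rw [← finner_self_eq, ← finner_self_eq]
      _ = finner U U * finner Z Z := by
          rw [finner_transpose_self, finner_transpose_self]
  -- bound T2
  have hT2 : finner Z (U * Zᵀ * U) ≤ finner U U * finner Z Z := by
    have heq : finner Z (U * Zᵀ * U) = Matrix.trace ((Zᵀ * U) * (Zᵀ * U)) := by
      simp only [finner, Matrix.mul_assoc]
    rw [heq]
    refine le_trans (trace_mul_self_le _) ?_
    have heq2 : finner (Zᵀ * U) (Zᵀ * U) = finner (Uᵀ * Z) (Uᵀ * Z) := by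
      rw [finner_self_eq, finner_self_eq]
      have h : ∀ i j, (Zᵀ * U) i j = (Uᵀ * Z) j i := by
        intro i j
        simp [Matrix.mul_apply, Matrix.transpose_apply, mul_comm]
      simp_rw [h]
      exact Finset.sum_comm
    rw [heq2]; exact hUZ
  -- bound T3
  have hT3 : finner Z (U * Uᵀ * Z) ≤ finner U U * finner Z Z := by
    have heq : finner Z (U * Uᵀ * Z) = finner (Uᵀ * Z) (Uᵀ * Z) := by
      simp only [finner, Matrix.transpose_mul, Matrix.transpose_transpose, Matrix.mul_assoc]
    rw [heq]; exact hUZ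
  -- bound T4
  have hT4 : -(fnorm W * finner Z Z) ≤ finner Z (W * Z) := by
    have heq : finner Z (W * Z) = finner W (Z * Zᵀ) := by
      simp only [finner, hW]
      rw [← Matrix.mul_assoc, Matrix.trace_mul_comm (Zᵀ * W) Z, ← Matrix.mul_assoc]
      rw [Matrix.trace_mul_comm (Z * Zᵀ) W, ← Matrix.mul_assoc]
    have hZZ : finner (Z * Zᵀ) (Z * Zᵀ) ≤ finner Z Z * finner Z Z := by
      rw [finner_self_eq]
      have h : ∑ i, ∑ j, ((Z * Zᵀ) i j) ^ 2
          = ∑ i, ∑ j, (∑ k, Z i k * Z j k) ^ 2 := by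
        simp [Matrix.mul_apply, Matrix.transpose_apply]
      rw [h]
      calc ∑ i, ∑ j, (∑ k, Z i k * Z j k) ^ 2
          ≤ (∑ i, ∑ k, (Z i k) ^ 2) * (∑ j, ∑ k, (Z j k) ^ 2) := key _ _
        _ = finner Z Z * finner Z Z := by rw [← finner_self_eq]
    have hcs := finner_cs W (Z * Zᵀ)
    have hsq : (finner W (Z * Zᵀ)) ^ 2 ≤ (fnorm W * finner Z Z) ^ 2 := by
      calc (finner W (Z * Zᵀ)) ^ 2 ≤ finner W W * finner (Z * Zᵀ) (Z * Zᵀ) := hcs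
        _ ≤ (fnorm W) ^ 2 * (finner Z Z * finner Z Z) := by
            rw [hwsq]
            exact mul_le_mul_of_nonneg_left hZZ (finner_self_nonneg W)
        _ = (fnorm W * finner Z Z) ^ 2 := by ring
    rw [heq]
    nlinarith [sq_nonneg (finner W (Z * Zᵀ) + fnorm W * finner Z Z),
      mul_nonneg hw0 hc0]
  -- put it together
  have hlin : finner Z ((2:ℝ) • (Z * Uᵀ * U + U * Zᵀ * U + U * Uᵀ * Z - W * Z))
      = 2 * (finner Z (Z * Uᵀ * U) + finner Z (U * Zᵀ * U) + finner Z (U * Uᵀ * Z)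
          - finner Z (W * Z)) := by
    rw [finner_smul, finner_sub, finner_add, finner_add]
  rw [hlin]
  have hb2 : 0 ≤ (finner U Z) ^ 2 := sq_nonneg _
  have hE : 0 ≤ 6 * finner U U * finner Z Z + 12 * (finner U Z) ^ 2
      + 2 * fnorm W * finner Z Z := by
    have h1 := mul_nonneg ha0 hc0
    have h2 := mul_nonneg hw0 hc0
    nlinarith
  nlinarith [mul_nonneg ha0 hc0, mul_nonneg hw0 hc0,
    mul_le_mul_of_nonneg_right hE (le_trans zero_le_one hL)]
end

section
/- Let f, ψ: R^n → R be twice continuously differentiable with ψ convex, and suppose that for all x the matrix L∇²ψ(x) − ∇²f(x) and L∇²ψ(x) + ∇²f(x) are both positive semidefinite. Then for all x, y: |f(x) − f(y) − ⟨∇f(y), x−y⟩| ≤ L D_ψ(x,y), where D_ψ(x,y) = ψ(x) − ψ(y) − ⟨∇ψ(y), x−y⟩ is the Bregman distance. -/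
open RealInnerProductSpace

noncomputable def hessQF {n : ℕ}
    (f : EuclideanSpace ℝ (Fin n) → ℝ) (x v : EuclideanSpace ℝ (Fin n)) : ℝ :=
  (fderiv ℝ (fderiv ℝ f) x v) v

lemma grad_inner {n : ℕ} (f : EuclideanSpace ℝ (Fin n) → ℝ) (y v : EuclideanSpace ℝ (Fin n)) :
    ⟪gradient f y, v⟫ = fderiv ℝ f y v := by
  rw [gradient, InnerProductSpace.toDual_symm_apply]

lemma key_s6 {n : ℕ} (g : EuclideanSpace ℝ (Fin n) → ℝ) (hg : ContDiff ℝ 2 g)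
    (hpsd : ∀ z v, 0 ≤ hessQF g z v) (x y : EuclideanSpace ℝ (Fin n)) :
    0 ≤ g x - g y - fderiv ℝ g y (x - y) := by
  set u := x - y with hu
  set γ : ℝ → EuclideanSpace ℝ (Fin n) := fun t => y + t • u with hγ
  have hgd : Differentiable ℝ g := hg.differentiable (by norm_num)
  have hFd : Differentiable ℝ (fderiv ℝ g) :=
    (hg.fderiv_right (m := 1) (by norm_num)).differentiable (by norm_num)
  have hγd : ∀ t : ℝ, HasDerivAt γ u t := by
    intro t
    simpa [hγ] using ((hasDerivAt_id t).smul_const u).const_add y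
  set φ' : ℝ → ℝ := fun t => fderiv ℝ g (γ t) u with hφ'
  have hφd : ∀ t : ℝ, HasDerivAt (fun s => g (γ s)) (φ' t) t := fun t =>
    (hgd (γ t)).hasFDerivAt.comp_hasDerivAt t (hγd t)
  have hφ'd : ∀ t : ℝ, HasDerivAt φ' (hessQF g (γ t) u) t := by
    intro t
    have h1 : HasDerivAt (fun s => fderiv ℝ (fderiv ℝ g) (γ t) u) 0 t := hasDerivAt_const _ _
    have h2 : HasDerivAt (fun s => fderiv ℝ g (γ s)) (fderiv ℝ (fderiv ℝ g) (γ t) u) t :=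
      (hFd (γ t)).hasFDerivAt.comp_hasDerivAt t (hγd t)
    have := h2.clm_apply (hasDerivAt_const t u)
    simpa [hessQF] using this
  -- φ' is monotone since its derivative is nonneg
  have hmono : MonotoneOn φ' (Set.Icc 0 1) := by
    apply monotoneOn_of_deriv_nonneg (convex_Icc 0 1)
      (fun t _ => (hφ'd t).continuousAt.continuousWithinAt)
      (fun t _ => ((hφ'd t).differentiableAt).differentiableWithinAt)
    intro t _
    rw [(hφ'd t).deriv]
    exact hpsd _ _
  obtain ⟨c, hc, hceq⟩ := exists_hasDerivAt_eq_slope (a := 0) (b := 1) (fun s => g (γ s)) φ'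
    (by norm_num) (fun t _ => (hφd t).continuousAt.continuousWithinAt) (fun t _ => hφd t)
  have h0 : γ 0 = y := by simp [hγ]
  have h1 : γ 1 = x := by simp [hγ, hu]
  have hslope : g x - g y = φ' c := by
    rw [← h0, ← h1]
    rw [hceq]; norm_num
  have : φ' 0 ≤ φ' c :=
    hmono ⟨le_refl 0, zero_le_one⟩ ⟨le_of_lt hc.1, le_of_lt hc.2⟩ (le_of_lt hc.1)
  have hφ'0 : φ' 0 = fderiv ℝ g y u := by simp [hφ', h0]
  linarith [hslope ▸ this, hφ'0 ▸ this]

lemma hess_comb {n : ℕ} (f ψ : EuclideanSpace ℝ (Fin n) → ℝ) (L : ℝ)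
    (hf : ContDiff ℝ 2 f) (hψ : ContDiff ℝ 2 ψ) (c : ℝ) (x v : EuclideanSpace ℝ (Fin n)) :
    hessQF (fun z => L * ψ z + c * f z) x v = L * hessQF ψ x v + c * hessQF f x v := by
  have hψd : Differentiable ℝ ψ := hψ.differentiable (by norm_num)
  have hfd : Differentiable ℝ f := hf.differentiable (by norm_num)
  have hψF : Differentiable ℝ (fderiv ℝ ψ) :=
    (hψ.fderiv_right (m := 1) (by norm_num)).differentiable (by norm_num)
  have hfF : Differentiable ℝ (fderiv ℝ f) :=
    (hf.fderiv_right (m := 1) (by norm_num)).differentiable (by norm_num)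
  have h1 : fderiv ℝ (fun z => L * ψ z + c * f z) =
      fun z => L • fderiv ℝ ψ z + c • fderiv ℝ f z := by
    funext z
    rw [fderiv_fun_add ((hψd z).const_mul L) ((hfd z).const_mul c),
      fderiv_const_mul (hψd z), fderiv_const_mul (hfd z)]
  rw [hessQF, h1]
  have h2 : fderiv ℝ (fun z => L • fderiv ℝ ψ z + c • fderiv ℝ f z) x =
      L • fderiv ℝ (fderiv ℝ ψ) x + c • fderiv ℝ (fderiv ℝ f) x := by
    rw [fderiv_fun_add (f := fun z => L • fderiv ℝ ψ z) (g := fun z => c • fderiv ℝ f z)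
        ((hψF x).const_smul L) ((hfF x).const_smul c),
      fderiv_fun_const_smul (hψF x), fderiv_fun_const_smul (hfF x)]
  rw [h2]
  simp [hessQF]

theorem stmt6 (n : ℕ) (f ψ : EuclideanSpace ℝ (Fin n) → ℝ) (L : ℝ) (hL : 0 < L)
    (hf : ContDiff ℝ 2 f) (hψ : ContDiff ℝ 2 ψ)
    (hconv : ConvexOn ℝ Set.univ ψ)
    (hpsd₁ : ∀ x v, 0 ≤ L * hessQF ψ x v - hessQF f x v)
    (hpsd₂ : ∀ x v, 0 ≤ L * hessQF ψ x v + hessQF f x v) :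
    ∀ x y : EuclideanSpace ℝ (Fin n),
      |f x - f y - ⟪gradient f y, x - y⟫| ≤
        L * (ψ x - ψ y - ⟪gradient ψ y, x - y⟫) := by
  intro x y
  have hψd : Differentiable ℝ ψ := hψ.differentiable (by norm_num)
  have hfd : Differentiable ℝ f := hf.differentiable (by norm_num)
  have hg1 : ContDiff ℝ 2 (fun z => L * ψ z + (-1 : ℝ) * f z) :=
    (hψ.const_smul L).add (hf.const_smul (-1 : ℝ))
  have hg2 : ContDiff ℝ 2 (fun z => L * ψ z + (1 : ℝ) * f z) :=
    (hψ.const_smul L).add (hf.const_smul (1 : ℝ))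
  have k1 := key_s6 _ hg1 (fun z v => by
    rw [hess_comb f ψ L hf hψ (-1) z v]; linarith [hpsd₁ z v]) x y
  have k2 := key_s6 _ hg2 (fun z v => by
    rw [hess_comb f ψ L hf hψ 1 z v]; linarith [hpsd₂ z v]) x y
  have hd1 : ∀ z : EuclideanSpace ℝ (Fin n), ∀ c : ℝ,
      fderiv ℝ (fun z => L * ψ z + c * f z) z (x - y) =
        L * fderiv ℝ ψ z (x - y) + c * fderiv ℝ f z (x - y) := by
    intro z c
    rw [fderiv_fun_add ((hψd z).const_mul L) ((hfd z).const_mul c),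
      fderiv_const_mul (hψd z), fderiv_const_mul (hfd z)]
    simp
  rw [hd1] at k1 k2
  rw [grad_inner, grad_inner]
  rw [abs_le]
  constructor <;> nlinarith [k1, k2]
end
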